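/- Let X be a second-countable Hausdorff space and A ⊆ X an uncountable subset such that the subspace A is a sequential space. Then A contains an infinite subset closed in X. -/

import Mathlib

open Topology Filter

/-- In a second-countable Hausdorff space, an uncountable subset which is a
sequential space in the subspace topology contains an infinite subset closed in
the whole space. -/
theorem stmt_14 {X : Type*} [TopologicalSpace X] [T2Space X]
    [SecondCountableTopology X] {A : Set X} (hA : ¬ A.Countable)
    (hseq : SequentialSpace A) :
    ∃ C : Set X, C ⊆ A ∧ C.Infinite ∧ IsClosed C := by
  -- A is not discrete, else it would be countable
  have hnd : ¬ DiscreteTopology A := by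
    intro hd
    have : Countable A := (TopologicalSpace.separableSpace_iff_countable).1 inferInstance
    exact hA (Set.countable_coe_iff.mpr this)
  rw [discreteTopology_iff_nhds_ne] at hnd
  push_neg at hnd
  obtain ⟨a, ha⟩ := hnd
  have hne : (𝓝[≠] a).NeBot := ha
  -- the complement of {a} in A is not closed
  have hmem : (a : A) ∈ closure ({a}ᶜ : Set A) :=
    mem_closure_iff_nhdsWithin_neBot.2 hne
  have hnotclosed : ¬ IsClosed ({a}ᶜ : Set A) := by
    intro h
    exact (by simp : (a : A) ∉ ({a}ᶜ : Set A)) (h.closure_subset hmem)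
  have hnsc : ¬ IsSeqClosed ({a}ᶜ : Set A) := fun h => hnotclosed h.isClosed
  rw [IsSeqClosed] at hnsc
  push_neg at hnsc
  obtain ⟨u, p, hu, hup, hp⟩ := hnsc
  have hpa : p = a := by simpa using hp
  subst hpa
  set g : ℕ → X := fun n => (u n : X) with hg
  have hgt : Filter.Tendsto g Filter.atTop (𝓝 (p : X)) :=
    ((continuous_subtype_val.tendsto _).comp hup)
  have hga : ∀ n, g n ≠ (p : X) := by
    intro n h
    exact hu n (by ext; exact h)
  refine ⟨insert (p : X) (Set.range g), ?_, ?_, ?_⟩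
  · rintro x (rfl | ⟨n, rfl⟩)
    · exact p.2
    · exact (u n).2
  · intro hfin
    have hrfin : (Set.range g).Finite := hfin.subset (Set.subset_insert _ _)
    have hcl : (p : X) ∈ Set.range g := by
      have : (p : X) ∈ closure (Set.range g) :=
        mem_closure_of_tendsto hgt (Filter.Eventually.of_forall fun n => ⟨n, rfl⟩)
      rwa [hrfin.isClosed.closure_eq] at this
    obtain ⟨n, hn⟩ := hcl
    exact hga n hn
  · exact (hgt.isCompact_insert_range).isClosed
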